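/- Let (λ_j)_{j≥0} and (a_j)_{j≥0} be nonnegative real sequences with ∑_{i=0}^∞ λ_i a_i < ∞, and set Λ_k := ∑_{i=0}^k λ_i. If (a_j) is monotonically nonincreasing, then: (i) for every k with Λ_k > 0, a_k ≤ (1/Λ_k)·∑_{i=0}^∞ λ_i a_i; (ii) (Λ_k − Λ_{⌈k/2⌉})·a_k → 0 as k → ∞; (iii) if inf_j λ_j > 0 then (k+1)·a_k → 0; (iv) if λ_k = (k+1)^p for some p ≥ 0 and all k ≥ 1, then (k+1)^{p+1}·a_k → 0. -/

import Mathlib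

open Filter Finset

/-- Lemma 1 (summable sequence convergence rates), Part 1 (monotonicity):
if `(λ_j)` and `(a_j)` are nonnegative, `∑ λ_i a_i < ∞` and `(a_j)` is
monotonically nonincreasing, then (i) `a_k ≤ (1/Λ_k) ∑_{i=0}^∞ λ_i a_i` whenever `Λ_k > 0`,
(ii) `(Λ_k − Λ_{⌈k/2⌉}) a_k → 0`, (iii) if `inf λ_j > 0` then `(k+1) a_k → 0`, and
(iv) if `λ_k = (k+1)^p` for all `k ≥ 1` (with `p ≥ 0`) then `(k+1)^{p+1} a_k → 0`. -/
theorem summable_sequence_rates_monotone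
    (lam a : ℕ → ℝ)
    (hlam : ∀ n, 0 ≤ lam n) (ha : ∀ n, 0 ≤ a n)
    (hsum : Summable (fun i => lam i * a i))
    (hmono : Antitone a) :
    (∀ k : ℕ, 0 < (∑ i ∈ Finset.range (k + 1), lam i) →
        a k ≤ (1 / ∑ i ∈ Finset.range (k + 1), lam i) * ∑' i, lam i * a i) ∧
    Filter.Tendsto
      (fun k : ℕ =>
        ((∑ i ∈ Finset.range (k + 1), lam i) -
          ∑ i ∈ Finset.range ((k + 1) / 2 + 1), lam i) * a k)
      Filter.atTop (nhds 0) ∧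
    ((∃ ε > (0 : ℝ), ∀ j, ε ≤ lam j) →
      Filter.Tendsto (fun k : ℕ => ((k : ℝ) + 1) * a k) Filter.atTop (nhds 0)) ∧
    (∀ p : ℝ, 0 ≤ p → (∀ k : ℕ, 1 ≤ k → lam k = ((k : ℝ) + 1) ^ p) →
      Filter.Tendsto (fun k : ℕ => ((k : ℝ) + 1) ^ (p + 1) * a k) Filter.atTop (nhds 0)) := by
  have hnn : ∀ n, 0 ≤ lam n * a n := fun n => mul_nonneg (hlam n) (ha n)
  -- termwise lower bound of a partial segment
  have hseg : ∀ m k : ℕ, m ≤ k →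
      ((∑ i ∈ Finset.range (k + 1), lam i) - ∑ i ∈ Finset.range (m + 1), lam i)
        = ∑ i ∈ Finset.Ico (m + 1) (k + 1), lam i := by
    intro m k hmk
    rw [Finset.sum_Ico_eq_sub _ (by omega)]
  have key : ∀ m k : ℕ, m ≤ k →
      ((∑ i ∈ Finset.range (k + 1), lam i) - ∑ i ∈ Finset.range (m + 1), lam i) * a k
        ≤ ∑' j, lam (j + (m + 1)) * a (j + (m + 1)) := by
    intro m k hmk
    rw [hseg m k hmk, Finset.sum_mul]
    calc ∑ i ∈ Finset.Ico (m + 1) (k + 1), lam i * a k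
        ≤ ∑ i ∈ Finset.Ico (m + 1) (k + 1), lam i * a i := by
          apply Finset.sum_le_sum
          intro i hi
          simp only [Finset.mem_Ico] at hi
          exact mul_le_mul_of_nonneg_left (hmono (by omega)) (hlam i)
      _ = ∑ j ∈ Finset.range (k + 1 - (m + 1)), lam (j + (m + 1)) * a (j + (m + 1)) := by
          rw [Finset.sum_Ico_eq_sum_range]
          exact Finset.sum_congr rfl fun j _ => by rw [Nat.add_comm]
      _ ≤ _ := Summable.sum_le_tsum _ (fun i _ => hnn _)
            ((summable_nat_add_iff (f := fun i => lam i * a i) (m + 1)).2 hsum)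
  -- part (i)
  have part1 : ∀ k : ℕ, 0 < (∑ i ∈ Finset.range (k + 1), lam i) →
      a k ≤ (1 / ∑ i ∈ Finset.range (k + 1), lam i) * ∑' i, lam i * a i := by
    intro k hk
    rw [one_div, inv_mul_eq_div, le_div_iff₀ hk]
    calc a k * ∑ i ∈ Finset.range (k + 1), lam i
        = ∑ i ∈ Finset.range (k + 1), lam i * a k := by
          rw [← Finset.sum_mul, mul_comm]
      _ ≤ ∑ i ∈ Finset.range (k + 1), lam i * a i := by
          apply Finset.sum_le_sum
          intro i hi
          simp only [Finset.mem_range] at hi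
          exact mul_le_mul_of_nonneg_left (hmono (by omega)) (hlam i)
      _ ≤ ∑' i, lam i * a i := Summable.sum_le_tsum _ (fun i _ => hnn _) hsum
  -- part (ii)
  set b : ℕ → ℝ := fun k =>
    ((∑ i ∈ Finset.range (k + 1), lam i) -
      ∑ i ∈ Finset.range ((k + 1) / 2 + 1), lam i) * a k with hb
  have hmk : ∀ k : ℕ, (k + 1) / 2 ≤ k := fun k => by omega
  have hb0 : ∀ k, 0 ≤ b k := by
    intro k
    apply mul_nonneg _ (ha k)
    rw [hseg _ _ (hmk k)]
    exact Finset.sum_nonneg fun i _ => hlam i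
  have hg : Tendsto (fun m => ∑' j, lam (j + m) * a (j + m)) atTop (nhds 0) :=
    tendsto_sum_nat_add fun i => lam i * a i
  have hcomp : Tendsto (fun k : ℕ => (k + 1) / 2 + 1) atTop atTop := by
    apply tendsto_atTop_atTop.2
    intro n
    exact ⟨2 * n, fun x hx => by omega⟩
  have part2 : Tendsto b atTop (nhds 0) :=
    squeeze_zero hb0 (fun k => key _ _ (hmk k)) (hg.comp hcomp)
  -- cast facts about m = (k+1)/2
  have hcastm : ∀ k : ℕ, ((((k + 1) / 2 : ℕ) : ℝ)) ≤ ((k : ℝ) + 1) / 2 := by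
    intro k
    have := Nat.cast_div_le (m := k + 1) (n := 2) (α := ℝ)
    push_cast at this
    linarith
  have hcastm' : ∀ k : ℕ, ((k : ℝ) - 1) / 2 ≤ (k : ℝ) - (((k + 1) / 2 : ℕ) : ℝ) := by
    intro k
    linarith [hcastm k]
  have hcastl : ∀ k : ℕ, ((k : ℝ) - 1) / 2 ≤ (((k + 1) / 2 : ℕ) : ℝ) := by
    intro k
    have h1 : k ≤ 2 * ((k + 1) / 2) + 1 := by omega
    have h2 : ((k : ℝ)) ≤ 2 * (((k + 1) / 2 : ℕ) : ℝ) + 1 := by exact_mod_cast h1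
    linarith
  -- part (iii)
  have part3 : (∃ ε > (0 : ℝ), ∀ j, ε ≤ lam j) →
      Tendsto (fun k : ℕ => ((k : ℝ) + 1) * a k) atTop (nhds 0) := by
    rintro ⟨ε, hε, hεle⟩
    apply squeeze_zero' (Filter.Eventually.of_forall fun k =>
      mul_nonneg (by positivity) (ha k))
      _ (by simpa using part2.const_mul (4 / ε))
    filter_upwards [Filter.eventually_ge_atTop 3] with k hk3
    set m := (k + 1) / 2 with hm
    have hΛ : ε * ((k : ℝ) - m) ≤
        (∑ i ∈ Finset.range (k + 1), lam i) - ∑ i ∈ Finset.range (m + 1), lam i := by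
      rw [hseg _ _ (hmk k)]
      have hcard : (Finset.Ico (m + 1) (k + 1)).card = k - m := by
        rw [Nat.card_Ico]; omega
      calc ε * ((k : ℝ) - m) ≤ ε * ((k - m : ℕ) : ℝ) := by
            have : ((k - m : ℕ) : ℝ) = (k : ℝ) - m := by
              have := hmk k; exact Nat.cast_sub this
            rw [this]
        _ = (Finset.Ico (m + 1) (k + 1)).card • ε := by
            rw [hcard]; push_cast; ring
        _ ≤ ∑ i ∈ Finset.Ico (m + 1) (k + 1), lam i :=
            Finset.card_nsmul_le_sum _ _ _ fun i _ => hεle i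
    have hk3' : (3 : ℝ) ≤ (k : ℝ) := by exact_mod_cast hk3
    have hkm : ((k : ℝ) + 1) ≤ (4 / ε) * (ε * ((k : ℝ) - m)) := by
      have h1 := hcastm k
      have : (4 / ε) * (ε * ((k : ℝ) - m)) = 4 * ((k : ℝ) - m) := by
        field_simp
      rw [this]
      linarith [hcastm' k]
    calc ((k : ℝ) + 1) * a k ≤ ((4 / ε) * (ε * ((k : ℝ) - m))) * a k :=
          mul_le_mul_of_nonneg_right hkm (ha k)
      _ ≤ (4 / ε) * b k := by
          rw [hb]
          have := mul_le_mul_of_nonneg_right hΛ (ha k)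
          have h4ε : 0 ≤ 4 / ε := by positivity
          calc ((4 / ε) * (ε * ((k : ℝ) - m))) * a k
              = (4 / ε) * ((ε * ((k : ℝ) - m)) * a k) := by ring
            _ ≤ _ := by
                apply mul_le_mul_of_nonneg_left _ h4ε
                exact this
  -- part (iv)
  have part4 : ∀ p : ℝ, 0 ≤ p → (∀ k : ℕ, 1 ≤ k → lam k = ((k : ℝ) + 1) ^ p) →
      Tendsto (fun k : ℕ => ((k : ℝ) + 1) ^ (p + 1) * a k) atTop (nhds 0) := by
    intro p hp hlp
    apply squeeze_zero' (Filter.Eventually.of_forall fun k =>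
      mul_nonneg (Real.rpow_nonneg (by positivity) _) (ha k))
      _ (by simpa using part2.const_mul (4 * 2 ^ p))
    filter_upwards [Filter.eventually_ge_atTop 3] with k hk3
    set m := (k + 1) / 2 with hm
    have hk3' : (3 : ℝ) ≤ (k : ℝ) := by exact_mod_cast hk3
    have hkpos : (0 : ℝ) < (k : ℝ) + 1 := by linarith
    -- each term in the segment is at least ((k+1)/2)^p
    have hΛ : ((k : ℝ) - m) * (((k : ℝ) + 1) / 2) ^ p ≤
        (∑ i ∈ Finset.range (k + 1), lam i) - ∑ i ∈ Finset.range (m + 1), lam i := by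
      rw [hseg _ _ (hmk k)]
      have hcard : (Finset.Ico (m + 1) (k + 1)).card = k - m := by
        rw [Nat.card_Ico]; omega
      have hterm : ∀ i ∈ Finset.Ico (m + 1) (k + 1),
          (((k : ℝ) + 1) / 2) ^ p ≤ lam i := by
        intro i hi
        simp only [Finset.mem_Ico] at hi
        rw [hlp i (by omega)]
        apply Real.rpow_le_rpow (by positivity) _ hp
        have h1 : m + 1 ≤ i := hi.1
        have h2 : ((m : ℝ)) + 1 ≤ (i : ℝ) := by exact_mod_cast h1
        have h3 := hcastm' k
        -- need (k+1)/2 ≤ i + 1 ; from m ≥ (k-1)/2 : i+1 ≥ m+2 ≥ (k-1)/2+2 ≥ (k+1)/2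
        nlinarith [hcastl k]
      calc ((k : ℝ) - m) * (((k : ℝ) + 1) / 2) ^ p
          ≤ ((k - m : ℕ) : ℝ) * (((k : ℝ) + 1) / 2) ^ p := by
            have : ((k - m : ℕ) : ℝ) = (k : ℝ) - m := by
              have := hmk k; exact Nat.cast_sub this
            rw [this]
        _ = (Finset.Ico (m + 1) (k + 1)).card • ((((k : ℝ) + 1) / 2) ^ p) := by
            rw [hcard]; push_cast; ring
        _ ≤ _ := Finset.card_nsmul_le_sum _ _ _ hterm
    have hhalfpos : (0 : ℝ) < ((k : ℝ) + 1) / 2 := by linarith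
    have hkm : ((k : ℝ) + 1) ^ (p + 1) ≤
        (4 * 2 ^ p) * (((k : ℝ) - m) * (((k : ℝ) + 1) / 2) ^ p) := by
      have hsplit : ((k : ℝ) + 1) ^ (p + 1) = ((k : ℝ) + 1) ^ p * ((k : ℝ) + 1) := by
        rw [Real.rpow_add hkpos, Real.rpow_one]
      have hdiv : (((k : ℝ) + 1) / 2) ^ p = ((k : ℝ) + 1) ^ p / 2 ^ p :=
        Real.div_rpow hkpos.le (by norm_num : (0:ℝ) ≤ 2) p
      rw [hsplit, hdiv]
      have h2p : (0 : ℝ) < (2 : ℝ) ^ p := Real.rpow_pos_of_pos (by norm_num) p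
      have hX : (0 : ℝ) < ((k : ℝ) + 1) ^ p := Real.rpow_pos_of_pos hkpos p
      have hlin : ((k : ℝ) + 1) ≤ 4 * ((k : ℝ) - m) := by linarith [hcastm' k]
      have : (4 * 2 ^ p) * (((k : ℝ) - m) * (((k : ℝ) + 1) ^ p / 2 ^ p))
          = 4 * ((k : ℝ) - m) * ((k : ℝ) + 1) ^ p := by
        field_simp
      rw [this]
      nlinarith
    calc ((k : ℝ) + 1) ^ (p + 1) * a k
        ≤ ((4 * 2 ^ p) * (((k : ℝ) - m) * (((k : ℝ) + 1) / 2) ^ p)) * a k :=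
          mul_le_mul_of_nonneg_right hkm (ha k)
      _ ≤ (4 * 2 ^ p) * b k := by
          rw [hb]
          have h2p : (0 : ℝ) ≤ 4 * (2 : ℝ) ^ p := by positivity
          calc ((4 * 2 ^ p) * (((k : ℝ) - m) * (((k : ℝ) + 1) / 2) ^ p)) * a k
              = (4 * 2 ^ p) * ((((k : ℝ) - m) * (((k : ℝ) + 1) / 2) ^ p) * a k) := by ring
            _ ≤ _ := by
                apply mul_le_mul_of_nonneg_left _ h2p
                exact mul_le_mul_of_nonneg_right hΛ (ha k)
  exact ⟨part1, part2, part3, part4⟩
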